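/- Let φ = {C_1, …, C_m} be a positive 3-CNF over variables V, let U = V ∪ {c_1, …, c_{m+1}} with new elements c_i, and let I consist of the implications {c_i, v} → c_{i+1} for each 1 ≤ i ≤ m and v ∈ C_i, together with {v, w} → c_{m+1} for each pair of variables v, w appearing together in some clause. For any A ⊆ U whose variable part A \ {c_1, …, c_{m+1}} contains no two variables appearing together in a clause, and any 1 < i ≤ m+1: c_i ∈ cl(A) if and only if c_i ∈ A, or both c_{i−1} ∈ cl(A) and C_{i−1} ∩ A ≠ ∅. -/
import Mathlib


/-- `F` is closed for the implicational base `I`. -/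
def ImpClosed {U : Type*} (I : Set (Set U × U)) (F : Set U) : Prop :=
  ∀ p ∈ I, p.1 ⊆ F → p.2 ∈ F

/-- The closure operator induced by an implicational base `I`. -/
def clI {U : Type*} (I : Set (Set U × U)) (A : Set U) : Set U :=
  ⋂₀ {F | ImpClosed I F ∧ A ⊆ F}

/-- Two (distinct) variables are in conflict if some clause contains both. -/
def Conflict {V : Type*} {m : ℕ} (C : Fin m → Finset V) (v w : V) : Prop :=
  v ≠ w ∧ ∃ j, v ∈ C j ∧ w ∈ C j

lemma subset_clI {U : Type*} (I : Set (Set U × U)) (A : Set U) : A ⊆ clI I A :=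
  fun _ hx F hF => hF.2 hx

lemma clI_closed {U : Type*} (I : Set (Set U × U)) (A : Set U) : ImpClosed I (clI I A) :=
  fun p hp hsub F hF => hF.1 p hp (fun x hx => hsub hx F hF)

lemma clI_min {U : Type*} {I : Set (Set U × U)} {A F : Set U}
    (h1 : ImpClosed I F) (h2 : A ⊆ F) : clI I A ⊆ F :=
  fun x hx => hx F ⟨h1, h2⟩

/-- Proposition about the first reduction: in the closure
system built from the positive 3-CNF `φ = (C_j)_{j : Fin m}` on
`U = V ∪ {c_1, …, c_{m+1}}` (gadget `c_{k+1}` is `Sum.inr k`), for any `A`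
whose variable part is conflict-free and any clause index `i` (so that
`Sum.inr i.succ` is `c_{i+2}`, covering all indices `1 < i ≤ m+1`):
`c_{i+1} ∈ cl(A)` iff `c_{i+1} ∈ A`, or `c_i ∈ cl(A)` and `C_i ∩ A ≠ ∅`. -/
theorem stmt11 {V : Type*} [Fintype V] (m : ℕ)
    (C : Fin m → Finset V) (hC : ∀ j, (C j).card = 3)
    (I : Set (Set (V ⊕ Fin (m + 1)) × (V ⊕ Fin (m + 1))))
    (hI : I =
      {p | ∃ (i : Fin m) (v : V), v ∈ C i ∧
        p = ({Sum.inr i.castSucc, Sum.inl v}, Sum.inr i.succ)} ∪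
      {p | ∃ v w : V, Conflict C v w ∧
        p = ({Sum.inl v, Sum.inl w}, Sum.inr (Fin.last m))})
    (A : Set (V ⊕ Fin (m + 1)))
    (hA : ¬ ∃ v w : V, Conflict C v w ∧ Sum.inl v ∈ A ∧ Sum.inl w ∈ A)
    (i : Fin m) :
    Sum.inr i.succ ∈ clI I A ↔
      (Sum.inr i.succ ∈ A ∨
        (Sum.inr i.castSucc ∈ clI I A ∧ ∃ v ∈ C i, Sum.inl v ∈ A)) := by
  subst hI
  set I := ({p | ∃ (i : Fin m) (v : V), v ∈ C i ∧
        p = ({Sum.inr i.castSucc, Sum.inl v}, Sum.inr i.succ)} ∪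
      {p | ∃ v w : V, Conflict C v w ∧
        p = ({Sum.inl v, Sum.inl w}, Sum.inr (Fin.last m))} :
      Set (Set (V ⊕ Fin (m + 1)) × (V ⊕ Fin (m + 1)))) with hIdef
  -- variables in the closure are in A
  have hvar : ∀ v : V, Sum.inl v ∈ clI I A → Sum.inl v ∈ A := by
    intro v hv
    have hG : ImpClosed I (A ∪ Set.range (Sum.inr : Fin (m+1) → V ⊕ Fin (m+1))) := by
      rintro p (⟨j, w, hw, rfl⟩ | ⟨w, x, hwx, rfl⟩) _
      · exact Or.inr ⟨j.succ, rfl⟩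
      · exact Or.inr ⟨Fin.last m, rfl⟩
    have := clI_min hG Set.subset_union_left hv
    rcases this with h | ⟨k, hk⟩
    · exact h
    · exact absurd hk (by simp)
  constructor
  · intro hmem
    by_contra hcon
    push_neg at hcon
    obtain ⟨hnA, hnot⟩ := hcon
    -- F = clI I A \ {Sum.inr i.succ} is closed and contains A
    have hF : ImpClosed I (clI I A \ {Sum.inr i.succ}) := by
      rintro p (⟨j, w, hw, rfl⟩ | ⟨w, x, hwx, rfl⟩) hsub
      · have hsub' : ({Sum.inr j.castSucc, Sum.inl w} : Set (V ⊕ Fin (m+1))) ⊆ clI I A :=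
          fun y hy => (hsub hy).1
        refine ⟨clI_closed I A _ (Or.inl ⟨j, w, hw, rfl⟩) hsub', ?_⟩
        simp only [Set.mem_singleton_iff, Sum.inr.injEq]
        intro hji
        have hji' : j = i := Fin.succ_injective _ hji
        subst hji'
        have h1 : Sum.inr j.castSucc ∈ clI I A := hsub' (Or.inl rfl)
        have h2 : Sum.inl w ∈ A := hvar w (hsub' (Or.inr rfl))
        exact hnot h1 w hw h2
      · exfalso
        apply hA
        exact ⟨w, x, hwx, hvar w ((hsub (Or.inl rfl)).1),
          hvar x ((hsub (Or.inr rfl)).1)⟩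
    have hAF : A ⊆ clI I A \ {Sum.inr i.succ} := by
      intro y hy
      refine ⟨subset_clI I A hy, ?_⟩
      simp only [Set.mem_singleton_iff]
      rintro rfl
      exact hnA hy
    exact (clI_min hF hAF hmem).2 rfl
  · rintro (h | ⟨hprev, v, hvC, hvA⟩)
    · exact subset_clI I A h
    · refine clI_closed I A _ (Or.inl ⟨i, v, hvC, rfl⟩) ?_
      rintro y (rfl | rfl)
      · exact hprev
      · exact subset_clI I A hvA
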